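/- A group G is left-orderable if and only if every finitely generated subgroup of G is left-orderable. -/

import Mathlib

/-- A group is left-orderable if it admits a strict linear order invariant under
left multiplication. -/
def LeftOrderable (G : Type*) [Group G] : Prop :=
  ∃ r : G → G → Prop, IsStrictTotalOrder G r ∧ ∀ f g h : G, r g h → r (f * g) (f * h)

/-- A group is left-orderable iff all of its finitely generated
subgroups are left-orderable. -/
theorem leftOrderable_iff_fg_subgroups {G : Type*} [Group G] :
    LeftOrderable G ↔ ∀ H : Subgroup G, H.FG → LeftOrderable H := by
  constructor
  · rintro ⟨r, hsto, hinv⟩ H _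
    haveI := hsto
    refine ⟨fun a b => r a b,
      { trichotomous := fun a b hab' hba' => (((trichotomous (r := r) a b).imp id
          (Or.imp (fun h => Subtype.ext h) id)).resolve_left hab').resolve_right hba'
        irrefl := fun a => irrefl (r := r) (a : G)
        trans := fun a b c hab hbc => _root_.trans (r := r) hab hbc },
      fun f g h hgh => hinv f g h hgh⟩
  · intro h
    classical
    have hex : ∀ S : Finset G, LeftOrderable (Subgroup.closure (S : Set G)) :=
      fun S => h _ ⟨S, rfl⟩
    choose r hr using hex
    have hsto := fun S => (hr S).1
    have hinv := fun S => (hr S).2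
    set q : Finset G → G → G → Prop := fun S g h =>
      ∃ (hg : g ∈ Subgroup.closure (S : Set G)) (hh : h ∈ Subgroup.closure (S : Set G)),
        r S ⟨g, hg⟩ ⟨h, hh⟩ with hq
    haveI : Nonempty (Finset G) := ⟨∅⟩
    set U : Ultrafilter (Finset G) := Ultrafilter.of Filter.atTop with hU
    have hUle : (U : Filter (Finset G)) ≤ Filter.atTop := Ultrafilter.of_le Filter.atTop
    have hmem : ∀ T : Finset G, {S | T ⊆ S} ∈ U := fun T =>
      hUle (Filter.mem_atTop T)
    refine ⟨fun g h => {S | q S g h} ∈ U,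
      { trichotomous := ?_, irrefl := ?_, trans := ?_ }, ?_⟩
    · -- trichotomous
      intro a b
      by_cases hab : a = b
      · exact fun _ _ => hab
      · have hsub : {S : Finset G | ({a, b} : Finset G) ⊆ S} ⊆
            {S | q S a b} ∪ {S | q S b a} := by
          intro S hS
          have ha : a ∈ Subgroup.closure (S : Set G) :=
            Subgroup.subset_closure (hS (by simp))
          have hb : b ∈ Subgroup.closure (S : Set G) :=
            Subgroup.subset_closure (hS (by simp))
          haveI := hsto S
          rcases trichotomous (r := r S) ⟨a, ha⟩ ⟨b, hb⟩ with h1 | h1 | h1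
          · exact Or.inl ⟨ha, hb, h1⟩
          · exact absurd (congrArg Subtype.val h1) hab
          · exact Or.inr ⟨hb, ha, h1⟩
        have : {S | q S a b} ∪ {S | q S b a} ∈ U :=
          Filter.mem_of_superset (hmem {a, b}) hsub
        rcases Ultrafilter.union_mem_iff.mp this with h1 | h1
        · exact fun h2 _ => absurd h1 h2
        · exact fun _ h2 => absurd h1 h2
    · -- irrefl
      intro a ha
      obtain ⟨S, hS⟩ := Filter.nonempty_of_mem ha
      obtain ⟨h1, h2, h3⟩ := hS
      haveI := hsto S
      exact irrefl_of (r S) _ h3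
    · -- trans
      intro a b c hab hbc
      refine Filter.mem_of_superset (Filter.inter_mem hab hbc) ?_
      rintro S ⟨⟨ha, hb, h1⟩, ⟨hb', hc, h2⟩⟩
      haveI := hsto S
      refine ⟨ha, hc, _root_.trans (r := r S) h1 ?_⟩
      convert h2 using 2
    · -- left invariance
      intro f g h hgh
      refine Filter.mem_of_superset (Filter.inter_mem (hmem {f}) hgh) ?_
      rintro S ⟨hfS, hg, hh, h1⟩
      have hf : f ∈ Subgroup.closure (S : Set G) :=
        Subgroup.subset_closure (hfS (by simp))
      refine ⟨mul_mem hf hg, mul_mem hf hh, ?_⟩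
      exact hinv S ⟨f, hf⟩ ⟨g, hg⟩ ⟨h, hh⟩ h1
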